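/- For every f ∈ [−1,1]ⁿ and every 1 ≤ k ≤ n, the induced map x ↦ I_{f+1}x + ℝ𝟏 from (ℝⁿ, ‖·‖_{(k)*}) to the quotient space (ℝⁿ, ‖·‖_{(k)*})/ℝ𝟏 has operator norm at most 1. -/

import Mathlib

open Finset

/-- The symmetric matrix `Θ_x`: off-diagonal entries `(xᵢ+xⱼ)/(2n)`, diagonal chosen
so that every row sums to zero. -/
noncomputable def Theta (n : ℕ) (x : Fin n → ℝ) : Matrix (Fin n) (Fin n) ℝ :=
  fun i j =>
    if i = j then -(∑ k ∈ Finset.univ.erase i, (x i + x k) / (2 * n))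
    else (x i + x j) / (2 * n)

/-- `I_x = Iₙ + Θ_x`. -/
noncomputable def Imat (n : ℕ) (x : Fin n → ℝ) : Matrix (Fin n) (Fin n) ℝ :=
  1 + Theta n x

/-- `E f`: the constant vector whose entries all equal the mean of `f`. -/
noncomputable def meanVec (n : ℕ) (f : Fin n → ℝ) : Fin n → ℝ :=
  fun _ => (∑ i, f i) / n

/-- The sup norm `‖x‖_∞`. -/
noncomputable def linf (n : ℕ) (x : Fin n → ℝ) : ℝ :=
  sSup (Set.range fun i => |x i|)

/-- The Ky Fan `k`-norm: the sum of the `k` largest absolute values of the entries,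
i.e. the maximum of `∑_{i ∈ S} |xᵢ|` over subsets `S` of cardinality `k`. -/
noncomputable def kyFan (n k : ℕ) (x : Fin n → ℝ) : ℝ :=
  sSup ((fun S : Finset (Fin n) => ∑ i ∈ S, |x i|) '' {S | S.card = k})

/-- The dual Ky Fan `k`-norm: `max(‖x‖_∞, ‖x‖₁ / k)`. -/
noncomputable def kyFanDual (n k : ℕ) (x : Fin n → ℝ) : ℝ :=
  max (linf n x) ((∑ i, |x i|) / k)

/-- A symmetric norm on `ℝⁿ`: a norm invariant under coordinate permutations
and sign changes. -/
structure IsSymmNorm (n : ℕ) (N : (Fin n → ℝ) → ℝ) : Prop where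
  add_le : ∀ x y, N (x + y) ≤ N x + N y
  smul : ∀ (c : ℝ) (x), N (c • x) = |c| * N x
  pos : ∀ x, x ≠ 0 → 0 < N x
  perm : ∀ (σ : Equiv.Perm (Fin n)) (x), N (x ∘ σ) = N x
  sign : ∀ (ε x : Fin n → ℝ), (∀ i, ε i = 1 ∨ ε i = -1) → N (ε * x) = N x

/-- Proposition 2.3: for `f ∈ [−1,1]ⁿ`, the map `x ↦ I_{f+1}x + ℝ𝟏` is a contraction
from `(ℝⁿ, dual Ky Fan k-norm)` to the quotient modulo the constants. -/
lemma abs_le_linf (n : ℕ) (x : Fin n → ℝ) (i : Fin n) : |x i| ≤ linf n x :=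
  le_csSup (Set.Finite.bddAbove (Set.finite_range _)) ⟨i, rfl⟩

lemma linf_nonneg (n : ℕ) (hn : 0 < n) (x : Fin n → ℝ) : 0 ≤ linf n x :=
  (abs_nonneg _).trans (abs_le_linf n x ⟨0, hn⟩)

lemma kyFanDual_nonneg (n k : ℕ) (hn : 0 < n) (x : Fin n → ℝ) :
    0 ≤ kyFanDual n k x :=
  (linf_nonneg n hn x).trans (le_max_left _ _)

lemma kyFanDual_contraction (n k : ℕ) (hn : 0 < n) (hk : 1 ≤ k)
    (M : Matrix (Fin n) (Fin n) ℝ)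
    (hrow : ∀ i, ∑ j, |M i j| ≤ 1) (hcol : ∀ j, ∑ i, |M i j| ≤ 1)
    (v : Fin n → ℝ) : kyFanDual n k (M.mulVec v) ≤ kyFanDual n k v := by
  haveI : Nonempty (Fin n) := ⟨⟨0, hn⟩⟩
  have hlv : 0 ≤ linf n v := linf_nonneg n hn v
  have hent : ∀ i, |M.mulVec v i| ≤ ∑ j, |M i j| * |v j| := by
    intro i
    calc |M.mulVec v i| = |∑ j, M i j * v j| := rfl
      _ ≤ ∑ j, |M i j * v j| := Finset.abs_sum_le_sum_abs _ _
      _ = ∑ j, |M i j| * |v j| := by simp [abs_mul]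
  have h1 : linf n (M.mulVec v) ≤ linf n v := by
    apply ciSup_le
    intro i
    calc |M.mulVec v i| ≤ ∑ j, |M i j| * |v j| := hent i
      _ ≤ ∑ j, |M i j| * linf n v :=
          Finset.sum_le_sum fun j _ =>
            mul_le_mul_of_nonneg_left (abs_le_linf n v j) (abs_nonneg _)
      _ = (∑ j, |M i j|) * linf n v := by rw [Finset.sum_mul]
      _ ≤ 1 * linf n v := mul_le_mul_of_nonneg_right (hrow i) hlv
      _ = linf n v := one_mul _
  have h2 : ∑ i, |M.mulVec v i| ≤ ∑ j, |v j| := by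
    calc ∑ i, |M.mulVec v i| ≤ ∑ i, ∑ j, |M i j| * |v j| :=
          Finset.sum_le_sum fun i _ => hent i
      _ = ∑ j, (∑ i, |M i j|) * |v j| := by
          rw [Finset.sum_comm]; simp [Finset.sum_mul]
      _ ≤ ∑ j, 1 * |v j| :=
          Finset.sum_le_sum fun j _ =>
            mul_le_mul_of_nonneg_right (hcol j) (abs_nonneg _)
      _ = ∑ j, |v j| := by simp
  have hkpos : (0:ℝ) < k := by exact_mod_cast hk
  apply max_le
  · exact h1.trans (le_max_left _ _)
  · exact le_trans (div_le_div_of_nonneg_right h2 hkpos.le) (le_max_right _ _)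

lemma Imat_off_sub (n : ℕ) (hn : 0 < n) (x : Fin n → ℝ) (i j : Fin n) (h : i ≠ j) :
    Imat n x i j - x j / n = x i / (2*n) - x j / (2*n) := by
  have hnR : (0:ℝ) < n := by exact_mod_cast hn
  simp only [Imat, Theta, Matrix.add_apply, Matrix.one_apply_ne h, if_neg h]
  field_simp
  ring

lemma Imat_diag_sub (n : ℕ) (hn : 0 < n) (x : Fin n → ℝ) (i : Fin n) :
    Imat n x i i - x i / n =
      1 - (∑ j ∈ univ.erase i, (x i / (2*n) + x j / (2*n))) - 2 * (x i / (2*n)) := by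
  have hnR : (0:ℝ) < n := by exact_mod_cast hn
  simp only [Imat, Theta, Matrix.add_apply, Matrix.one_apply_eq, eq_self_iff_true, if_true]
  have h1 : ∑ j ∈ univ.erase i, (x i + x j) / (2*(n:ℝ)) =
      ∑ j ∈ univ.erase i, (x i / (2*(n:ℝ)) + x j / (2*(n:ℝ))) :=
    Finset.sum_congr rfl fun j _ => add_div _ _ _
  have h2 : x i / (n:ℝ) = 2 * (x i / (2*(n:ℝ))) := by field_simp
  rw [h1, h2]; ring

theorem stmt_4 (n k : ℕ) (hn : 0 < n) (hk : 1 ≤ k) (hkn : k ≤ n)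
    (f : Fin n → ℝ) (hf : ∀ i, f i ∈ Set.Icc (-1 : ℝ) 1) (v : Fin n → ℝ) :
    ⨅ lam : ℝ, kyFanDual n k ((Imat n (f + 1)).mulVec v - lam • (fun _ => (1 : ℝ)))
      ≤ kyFanDual n k v := by
  haveI : Nonempty (Fin n) := ⟨⟨0, hn⟩⟩
  have hnR : (0:ℝ) < n := by exact_mod_cast hn
  set x : Fin n → ℝ := f + 1 with hxdef
  set a : Fin n → ℝ := fun i => x i / (2 * n) with hadef
  have ha0 : ∀ i, 0 ≤ a i := by
    intro i
    have h := (hf i).1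
    have hx0 : 0 ≤ x i := by simp [hxdef]; linarith
    have : (0:ℝ) < 2 * n := by linarith
    exact div_nonneg hx0 this.le
  have ha1 : ∀ i, a i ≤ 1 / n := by
    intro i
    have h := (hf i).2
    have hx2 : x i ≤ 2 := by simp [hxdef]; linarith
    rw [hadef]
    rw [div_le_div_iff₀ (by linarith) hnR]
    nlinarith
  set M : Matrix (Fin n) (Fin n) ℝ := fun i j => Imat n x i j - x j / n with hMdef
  have hMoff : ∀ i j, i ≠ j → M i j = a i - a j := fun i j h => Imat_off_sub n hn x i j h
  have hMdiag : ∀ i, M i i = 1 - (∑ j ∈ univ.erase i, (a i + a j)) - 2 * a i :=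
    fun i => Imat_diag_sub n hn x i
  have hrow : ∀ i, ∑ j, |M i j| ≤ 1 := by
    intro i
    rw [← Finset.add_sum_erase _ _ (mem_univ i)]
    have hTcongr : ∑ j ∈ univ.erase i, |M i j| = ∑ j ∈ univ.erase i, |a i - a j| := by
      refine Finset.sum_congr rfl fun j hj => ?_
      rw [hMoff i j (Finset.ne_of_mem_erase hj).symm]
    rw [hTcongr]
    set S' : ℝ := ∑ j ∈ univ.erase i, (a i + a j) with hS'
    set T : ℝ := ∑ j ∈ univ.erase i, |a i - a j| with hT
    have hA : T ≤ S' := by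
      refine Finset.sum_le_sum fun j _ => ?_
      have := ha0 i; have := ha0 j
      rw [abs_le]; constructor <;> linarith
    have hB : T ≤ ((n:ℝ) - 1) * (2 / n) - S' := by
      have hstep : T ≤ ∑ j ∈ univ.erase i, (2 / (n:ℝ) - (a i + a j)) := by
        refine Finset.sum_le_sum fun j _ => ?_
        have h1 := ha1 i; have h2 := ha1 j
        have hd : (2:ℝ) / n = 2 * (1 / n) := by ring
        rw [abs_le]; constructor <;> [skip; skip] <;> rw [hd] at * <;> linarith
      have hcard : (univ.erase i).card = n - 1 := by
        rw [Finset.card_erase_of_mem (mem_univ i), Finset.card_univ, Fintype.card_fin]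
      have : ∑ j ∈ univ.erase i, (2 / (n:ℝ) - (a i + a j)) = ((n:ℝ) - 1) * (2 / n) - S' := by
        rw [Finset.sum_sub_distrib, Finset.sum_const, hcard, ← hS', nsmul_eq_mul,
          Nat.cast_sub hn, Nat.cast_one]
      linarith
    have hd : (2:ℝ) * a i ≤ 2 / n := by
      have h1 := ha1 i
      have : (2:ℝ) / n = 2 * (1 / n) := by ring
      linarith [this]
    have h2n : ((n:ℝ) - 1) * (2 / n) = 2 - 2 / n := by field_simp
    have habs : |M i i| ≤ 1 - T := by
      rw [hMdiag i, abs_le]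
      constructor
      · rw [h2n] at hB; linarith
      · have := ha0 i; linarith
    linarith
  have hsym : ∀ i j, |M i j| = |M j i| := by
    intro i j
    rcases eq_or_ne i j with rfl | h
    · rfl
    · rw [hMoff i j h, hMoff j i h.symm, abs_sub_comm]
  have hcol : ∀ j, ∑ i, |M i j| ≤ 1 := by
    intro j
    calc ∑ i, |M i j| = ∑ i, |M j i| := Finset.sum_congr rfl fun i _ => hsym i j
      _ ≤ 1 := hrow j
  set lam : ℝ := ∑ j, (x j / n) * v j with hlam
  have key : (Imat n x).mulVec v - lam • (fun _ => (1:ℝ)) = M.mulVec v := by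
    funext i
    simp only [Pi.sub_apply, Pi.smul_apply, smul_eq_mul, mul_one, Matrix.mulVec,
      dotProduct, hlam]
    rw [← Finset.sum_sub_distrib]
    exact Finset.sum_congr rfl fun j _ => (sub_mul _ _ _).symm
  have hbdd : BddBelow (Set.range fun lam : ℝ =>
      kyFanDual n k ((Imat n x).mulVec v - lam • (fun _ => (1:ℝ)))) := by
    refine ⟨0, ?_⟩
    rintro y ⟨l, rfl⟩
    exact kyFanDual_nonneg n k hn _
  calc ⨅ lam : ℝ, kyFanDual n k ((Imat n x).mulVec v - lam • (fun _ => (1:ℝ)))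
      ≤ kyFanDual n k ((Imat n x).mulVec v - lam • (fun _ => (1:ℝ))) := ciInf_le hbdd lam
    _ = kyFanDual n k (M.mulVec v) := by rw [key]
    _ ≤ kyFanDual n k v := kyFanDual_contraction n k hn hk M hrow hcol v
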